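/- Let A₃ be the operator A₁ specialised to μ_X = μ_Y = 0, namely A₃f(x) = s_n⁴(1−ρ²)²·x·f⁗(x) + (1−ρ²)s_n³(n s_n(1−ρ²)+4ρx)·f‴(x) + s_n²((6ρ²−2)x+3n s_n ρ(1−ρ²))·f″(x) + s_n(n s_n(3ρ²−1)−4ρx)·f′(x) + (x−n s_n ρ)·f(x), and let A₄ be the second-order operator A₄g(x) = s_n²(1−ρ²)·x·g″(x) + s_n(n s_n(1−ρ²)+2ρx)·g′(x) + (n s_n ρ−x)·g(x). Then for every function f : ℝ → ℝ of class C⁴ and every x ∈ ℝ, A₃f(x) = A₄g(x), where g(x) = (1−ρ²)s_n²·f″(x) + 2ρ s_n·f′(x) − f(x). -/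

import Mathlib

/-- The fourth-order Stein operator `A₁` specialised to `μX = μY = 0`
(with `sₙ = σXσY/n`). -/
noncomputable def A3 (n : ℕ) (σX σY ρ : ℝ) (f : ℝ → ℝ) (x : ℝ) : ℝ :=
  (σX * σY / (n : ℝ)) ^ 4 * (1 - ρ ^ 2) ^ 2 * x * iteratedDeriv 4 f x
    + (1 - ρ ^ 2) * (σX * σY / (n : ℝ)) ^ 3
        * ((n : ℝ) * (σX * σY / (n : ℝ)) * (1 - ρ ^ 2) + 4 * ρ * x) * iteratedDeriv 3 f x
    + (σX * σY / (n : ℝ)) ^ 2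
        * ((6 * ρ ^ 2 - 2) * x + 3 * (n : ℝ) * (σX * σY / (n : ℝ)) * ρ * (1 - ρ ^ 2))
        * iteratedDeriv 2 f x
    + (σX * σY / (n : ℝ))
        * ((n : ℝ) * (σX * σY / (n : ℝ)) * (3 * ρ ^ 2 - 1) - 4 * ρ * x) * iteratedDeriv 1 f x
    + (x - (n : ℝ) * (σX * σY / (n : ℝ)) * ρ) * f x

/-- The second-order (variance-gamma) Stein operator `A₄` (with `sₙ = σXσY/n`). -/
noncomputable def A4 (n : ℕ) (σX σY ρ : ℝ) (g : ℝ → ℝ) (x : ℝ) : ℝ :=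
  (σX * σY / (n : ℝ)) ^ 2 * (1 - ρ ^ 2) * x * iteratedDeriv 2 g x
    + (σX * σY / (n : ℝ))
        * ((n : ℝ) * (σX * σY / (n : ℝ)) * (1 - ρ ^ 2) + 2 * ρ * x) * iteratedDeriv 1 g x
    + ((n : ℝ) * (σX * σY / (n : ℝ)) * ρ - x) * g x

/-- The fourth-order Stein operator `A₃` (i.e. `A₁` specialised to `μX = μY = 0`) applied to a
`C⁴` function `f` coincides with the second-order Stein operator `A₄` applied to
`g = (1 - ρ²) sₙ² f'' + 2ρ sₙ f' - f`, where `sₙ = σXσY/n`. -/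
theorem A3_eq_A4_of_substitution
    (σX σY ρ : ℝ) (hσX : 0 < σX) (hσY : 0 < σY)
    (hρ₁ : -1 < ρ) (hρ₂ : ρ < 1) (n : ℕ) (hn : 1 ≤ n)
    (s : ℝ) (hs : s = σX * σY / n)
    (f : ℝ → ℝ) (hf : ContDiff ℝ 4 f) (x : ℝ) :
    A3 n σX σY ρ f x
      = A4 n σX σY ρ
          (fun y => (1 - ρ ^ 2) * s ^ 2 * iteratedDeriv 2 f y + 2 * ρ * s * deriv f y - f y)
          x := by
  set a := (1 - ρ ^ 2) * s ^ 2 with ha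
  set b := 2 * ρ * s with hb
  have hd : ∀ m : ℕ, m < 4 → Differentiable ℝ (iteratedDeriv m f) := fun m hm =>
    hf.differentiable_iteratedDeriv m (by exact_mod_cast hm)
  have key : ∀ (u v w : ℕ), u < 4 → v < 4 → w < 4 →
      deriv (fun y => a * iteratedDeriv u f y + b * iteratedDeriv v f y - iteratedDeriv w f y)
        = fun y => a * iteratedDeriv (u + 1) f y + b * iteratedDeriv (v + 1) f y
            - iteratedDeriv (w + 1) f y := by
    intro u v w hu hv hw
    funext y
    rw [deriv_fun_sub (((hd u hu).const_mul a).fun_add ((hd v hv).const_mul b)).differentiableAt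
        ((hd w hw).differentiableAt),
      deriv_fun_add ((hd u hu).const_mul a).differentiableAt ((hd v hv).const_mul b).differentiableAt,
      deriv_const_mul _ ((hd u hu).differentiableAt),
      deriv_const_mul _ ((hd v hv).differentiableAt),
      ← iteratedDeriv_succ, ← iteratedDeriv_succ, ← iteratedDeriv_succ]
  have hg : (fun y => a * iteratedDeriv 2 f y + b * deriv f y - f y)
      = (fun y => a * iteratedDeriv 2 f y + b * iteratedDeriv 1 f y - iteratedDeriv 0 f y) := by
    funext y; rw [iteratedDeriv_one, iteratedDeriv_zero]
  have h1' : deriv (fun y => a * iteratedDeriv 2 f y + b * deriv f y - f y)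
      = fun y => a * iteratedDeriv 3 f y + b * iteratedDeriv 2 f y - iteratedDeriv 1 f y := by
    rw [hg, key 2 1 0 (by norm_num) (by norm_num) (by norm_num)]
  have h1 : iteratedDeriv 1 (fun y => a * iteratedDeriv 2 f y + b * deriv f y - f y)
      = fun y => a * iteratedDeriv 3 f y + b * iteratedDeriv 2 f y - iteratedDeriv 1 f y := by
    rw [iteratedDeriv_one, h1']
  have h2 : iteratedDeriv 2 (fun y => a * iteratedDeriv 2 f y + b * deriv f y - f y)
      = fun y => a * iteratedDeriv 4 f y + b * iteratedDeriv 3 f y - iteratedDeriv 2 f y := by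
    rw [show (2 : ℕ) = 1 + 1 from rfl, iteratedDeriv_succ, iteratedDeriv_one, h1',
      key 3 2 1 (by norm_num) (by norm_num) (by norm_num)]
  simp only [A3, A4, h1, h2]
  rw [← hs]
  simp only [ha, hb, iteratedDeriv_one]
  ring
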